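/- Let A be a group and d, c : A → A group homomorphisms satisfying d ∘ d = d, c ∘ d = d, d ∘ c = c and c ∘ c = c. Let M and N be normal subgroups of A with d(M) ⊆ M, c(M) ⊆ M, d(N) ⊆ N, c(N) ⊆ N. Assume that every element of (ker d) ∩ N commutes with every element of (ker c) ∩ M, and that every element of (ker d) ∩ M commutes with every element of (ker c) ∩ N. Define v₀(x, y) = x⁻¹·d(x)·y⁻¹·c(y)·d(x)⁻¹·x·c(y)⁻¹·y. Then for all m₁, m₂ ∈ M and n₁, n₂ ∈ N one has v₀(m₁·n₁, m₂·n₂) = v₀(m₁, m₂)·v₀(n₁, n₂). -/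

import Mathlib

theorem key_commutator_interchange {G : Type*} [Group G] (e p b f q v : G)
    (h1 : b * (f * q) = f * q * b)
    (h2a : (e * p)⁻¹ * v⁻¹ = v⁻¹ * (e * p)⁻¹)
    (h2 : b * v * b⁻¹ * v⁻¹ * (e * p)⁻¹ = (e * p)⁻¹ * (b * v * b⁻¹ * v⁻¹))
    (h3 : b * v * b⁻¹ * v⁻¹ * (f * q)⁻¹ = (f * q)⁻¹ * (b * v * b⁻¹ * v⁻¹))
    (h4 : e⁻¹ * (f * q)⁻¹ = (f * q)⁻¹ * e⁻¹)
    (h5 : e * (p * (f * q) * p⁻¹ * (f * q)⁻¹) = p * (f * q) * p⁻¹ * (f * q)⁻¹ * e)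
    (h6 : p * f = f * p)
    (h7 : p * q * p⁻¹ * q⁻¹ * f = f * (p * q * p⁻¹ * q⁻¹)) :
    e * p * b * (f * q * v) * (e * p * b)⁻¹ * (f * q * v)⁻¹ =
      p * q * p⁻¹ * q⁻¹ * (b * v * b⁻¹ * v⁻¹) := by
  calc e * p * b * (f * q * v) * (e * p * b)⁻¹ * (f * q * v)⁻¹
      = e * p * (b * (f * q)) * (v * (b⁻¹ * ((e * p)⁻¹ * v⁻¹) * (f * q)⁻¹)) := by group
    _ = e * p * (f * q * b) * (v * (b⁻¹ * ((e * p)⁻¹ * v⁻¹) * (f * q)⁻¹)) := by rw [h1]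
    _ = e * p * (f * q) * (b * v * b⁻¹ * ((e * p)⁻¹ * v⁻¹) * (f * q)⁻¹) := by group
    _ = e * p * (f * q) * (b * v * b⁻¹ * (v⁻¹ * (e * p)⁻¹) * (f * q)⁻¹) := by rw [h2a]
    _ = e * p * (f * q) * (b * v * b⁻¹ * v⁻¹ * (e * p)⁻¹ * (f * q)⁻¹) := by group
    _ = e * p * (f * q) * ((e * p)⁻¹ * (b * v * b⁻¹ * v⁻¹) * (f * q)⁻¹) := by rw [h2]
    _ = e * p * (f * q) * ((e * p)⁻¹ * (b * v * b⁻¹ * v⁻¹ * (f * q)⁻¹)) := by group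
    _ = e * p * (f * q) * ((e * p)⁻¹ * ((f * q)⁻¹ * (b * v * b⁻¹ * v⁻¹))) := by rw [h3]
    _ = e * (p * (f * q) * p⁻¹) * (e⁻¹ * (f * q)⁻¹) * (b * v * b⁻¹ * v⁻¹) := by group
    _ = e * (p * (f * q) * p⁻¹) * ((f * q)⁻¹ * e⁻¹) * (b * v * b⁻¹ * v⁻¹) := by rw [h4]
    _ = e * (p * (f * q) * p⁻¹ * (f * q)⁻¹) * (e⁻¹ * (b * v * b⁻¹ * v⁻¹)) := by group
    _ = p * (f * q) * p⁻¹ * (f * q)⁻¹ * e * (e⁻¹ * (b * v * b⁻¹ * v⁻¹)) := by rw [h5]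
    _ = p * f * (q * p⁻¹ * q⁻¹ * f⁻¹ * (b * v * b⁻¹ * v⁻¹)) := by group
    _ = f * p * (q * p⁻¹ * q⁻¹ * f⁻¹ * (b * v * b⁻¹ * v⁻¹)) := by rw [h6]
    _ = f * (p * q * p⁻¹ * q⁻¹) * (f⁻¹ * (b * v * b⁻¹ * v⁻¹)) := by group
    _ = p * q * p⁻¹ * q⁻¹ * f * (f⁻¹ * (b * v * b⁻¹ * v⁻¹)) := by rw [← h7]
    _ = p * q * p⁻¹ * q⁻¹ * (b * v * b⁻¹ * v⁻¹) := by group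



/-- The basic term `v₀(x, y) = x⁻¹·d(x)·y⁻¹·c(y)·d(x)⁻¹·x·c(y)⁻¹·y` defining the
subvariety of crossed modules inside the variety `PXM` of precrossed modules. -/
def v₀ {A : Type*} [Group A] (d c : A → A) (x y : A) : A :=
  x⁻¹ * d x * y⁻¹ * c y * (d x)⁻¹ * x * (c y)⁻¹ * y

theorem v₀_eq {A : Type*} [Group A] (d c : A → A) (x y : A) :
    v₀ d c x y = (x⁻¹ * d x) * (y⁻¹ * c y) * (x⁻¹ * d x)⁻¹ * (y⁻¹ * c y)⁻¹ := by
  simp only [v₀]; group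

/-- In a precrossed-module structure `(A, d, c)`, given ideals `M` and `N` such that
`[(ker d) ∩ N, (ker c) ∩ M] = 1` and `[(ker d) ∩ M, (ker c) ∩ N] = 1`, one has
`v₀(m₁n₁, m₂n₂) = v₀(m₁, m₂) · v₀(n₁, n₂)` for all `m₁, m₂ ∈ M`, `n₁, n₂ ∈ N`. -/
theorem stmt_13 {A : Type*} [Group A] (d c : A →* A)
    (hdd : ∀ a, d (d a) = d a) (hcd : ∀ a, c (d a) = d a)
    (hdc : ∀ a, d (c a) = c a) (hcc : ∀ a, c (c a) = c a)
    (M N : Subgroup A) (hMnorm : M.Normal) (hNnorm : N.Normal)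
    (hdM : ∀ m ∈ M, d m ∈ M) (hcM : ∀ m ∈ M, c m ∈ M)
    (hdN : ∀ n ∈ N, d n ∈ N) (hcN : ∀ n ∈ N, c n ∈ N)
    (hcomm₁ : ∀ k ∈ d.ker ⊓ N, ∀ l ∈ c.ker ⊓ M, Commute k l)
    (hcomm₂ : ∀ k ∈ d.ker ⊓ M, ∀ l ∈ c.ker ⊓ N, Commute k l)
    (m₁ m₂ : A) (hm₁ : m₁ ∈ M) (hm₂ : m₂ ∈ M)
    (n₁ n₂ : A) (hn₁ : n₁ ∈ N) (hn₂ : n₂ ∈ N) :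
    v₀ d c (m₁ * n₁) (m₂ * n₂) = v₀ d c m₁ m₂ * v₀ d c n₁ n₂ := by
  -- the six building blocks
  set p : A := m₁⁻¹ * d m₁ with hp
  set q : A := m₂⁻¹ * c m₂ with hq
  set b : A := n₁⁻¹ * d n₁ with hb
  set v : A := n₂⁻¹ * c n₂ with hv
  set e : A := n₁⁻¹ * p * n₁ * p⁻¹ with he
  set f : A := n₂⁻¹ * q * n₂ * q⁻¹ with hf
  -- kernel facts
  have hpd : d p = 1 := by rw [hp]; simp [hdd]
  have hqc : c q = 1 := by rw [hq]; simp [hcc]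
  have hbd : d b = 1 := by rw [hb]; simp [hdd]
  have hvc : c v = 1 := by rw [hv]; simp [hcc]
  have hed : d e = 1 := by rw [he]; simp [hpd]
  have hfc : c f = 1 := by rw [hf]; simp [hqc]
  -- subgroup membership facts
  have hpM : p ∈ M := mul_mem (inv_mem hm₁) (hdM _ hm₁)
  have hqM : q ∈ M := mul_mem (inv_mem hm₂) (hcM _ hm₂)
  have hbN : b ∈ N := mul_mem (inv_mem hn₁) (hdN _ hn₁)
  have hvN : v ∈ N := mul_mem (inv_mem hn₂) (hcN _ hn₂)
  have heN : e ∈ N := by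
    have : e = n₁⁻¹ * (p * n₁ * p⁻¹) := by rw [he]; group
    rw [this]
    exact mul_mem (inv_mem hn₁) (hNnorm.conj_mem _ hn₁ p)
  have heM : e ∈ M := by
    have := mul_mem (hMnorm.conj_mem _ hpM n₁⁻¹) (inv_mem hpM)
    rw [inv_inv] at this; exact this
  have hfN : f ∈ N := by
    have : f = n₂⁻¹ * (q * n₂ * q⁻¹) := by rw [hf]; group
    rw [this]
    exact mul_mem (inv_mem hn₂) (hNnorm.conj_mem _ hn₂ q)
  have hfM : f ∈ M := by
    have := mul_mem (hMnorm.conj_mem _ hqM n₂⁻¹) (inv_mem hqM)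
    rw [inv_inv] at this; exact this
  -- helper for inf membership
  have memdN : ∀ x : A, d x = 1 → x ∈ N → x ∈ d.ker ⊓ N := fun x h1 h2 =>
    Subgroup.mem_inf.mpr ⟨MonoidHom.mem_ker.mpr h1, h2⟩
  have memdM : ∀ x : A, d x = 1 → x ∈ M → x ∈ d.ker ⊓ M := fun x h1 h2 =>
    Subgroup.mem_inf.mpr ⟨MonoidHom.mem_ker.mpr h1, h2⟩
  have memcN : ∀ x : A, c x = 1 → x ∈ N → x ∈ c.ker ⊓ N := fun x h1 h2 =>
    Subgroup.mem_inf.mpr ⟨MonoidHom.mem_ker.mpr h1, h2⟩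
  have memcM : ∀ x : A, c x = 1 → x ∈ M → x ∈ c.ker ⊓ M := fun x h1 h2 =>
    Subgroup.mem_inf.mpr ⟨MonoidHom.mem_ker.mpr h1, h2⟩
  -- the commuting facts needed by the key lemma
  have K1 : Commute b (f * q) :=
    hcomm₁ b (memdN b hbd hbN) (f * q) (memcM _ (by simp [hfc, hqc]) (mul_mem hfM hqM))
  have K2 : Commute (e * p) v :=
    hcomm₂ (e * p) (memdM _ (by simp [hed, hpd]) (mul_mem heM hpM)) v (memcN v hvc hvN)
  have K3 : Commute (e * p) (b * v * b⁻¹ * v⁻¹) :=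
    hcomm₂ (e * p) (memdM _ (by simp [hed, hpd]) (mul_mem heM hpM)) _
      (memcN _ (by simp [hvc]) (mul_mem (mul_mem (mul_mem hbN hvN) (inv_mem hbN)) (inv_mem hvN)))
  have K4 : Commute (b * v * b⁻¹ * v⁻¹) (f * q) :=
    hcomm₁ _ (memdN _ (by simp [hbd]) (mul_mem (mul_mem (mul_mem hbN hvN) (inv_mem hbN)) (inv_mem hvN)))
      (f * q) (memcM _ (by simp [hfc, hqc]) (mul_mem hfM hqM))
  have K5 : Commute e (f * q) :=
    hcomm₁ e (memdN e hed heN) (f * q) (memcM _ (by simp [hfc, hqc]) (mul_mem hfM hqM))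
  have K6 : Commute e (p * (f * q) * p⁻¹ * (f * q)⁻¹) :=
    hcomm₁ e (memdN e hed heN) _
      (memcM _ (by simp [hqc, hfc, hpd]) (mul_mem (mul_mem (mul_mem hpM (mul_mem hfM hqM)) (inv_mem hpM)) (inv_mem (mul_mem hfM hqM))))
  have K7 : Commute p f :=
    hcomm₂ p (memdM p hpd hpM) f (memcN f hfc hfN)
  have K8 : Commute (p * q * p⁻¹ * q⁻¹) f :=
    hcomm₂ _ (memdM _ (by simp [hpd]) (mul_mem (mul_mem (mul_mem hpM hqM) (inv_mem hpM)) (inv_mem hqM)))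
      f (memcN f hfc hfN)
  -- decompositions
  have hA : (m₁ * n₁)⁻¹ * d (m₁ * n₁) = e * p * b := by
    rw [map_mul, he, hp, hb]; group
  have hB : (m₂ * n₂)⁻¹ * c (m₂ * n₂) = f * q * v := by
    rw [map_mul, hf, hq, hv]; group
  calc v₀ d c (m₁ * n₁) (m₂ * n₂)
      = e * p * b * (f * q * v) * (e * p * b)⁻¹ * (f * q * v)⁻¹ := by
        rw [v₀_eq, hA, hB]
    _ = p * q * p⁻¹ * q⁻¹ * (b * v * b⁻¹ * v⁻¹) :=
        key_commutator_interchange e p b f q v K1.eq (K2.inv_left.inv_right).eq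
          (K3.inv_left.symm).eq (K4.inv_right).eq (K5.inv_left.inv_right).eq
          K6.eq K7.eq K8.eq
    _ = v₀ d c m₁ m₂ * v₀ d c n₁ n₂ := by
        rw [v₀_eq, v₀_eq, hp, hq, hb, hv]
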